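/- Let X be a Banach space with the Opial property, M ⊂ X nonempty bounded closed convex, ε_n ∈ (0,1) a sequence, z ∈ M, and f : M → M weakly sequentially non-expansive on M. For each n define φ_n(x) := (1−ε_n) f(x) + ε_n z. If ξ_n is a fixed point of φ_n for each n (ξ_n ∈ M) and ε_n → 0, then ‖f(ξ_n) − ξ_n‖ ≤ ε_n d_M → 0 as n → ∞, where d_M is the diameter of M; i.e., {ξ_n} is an approximate fixed point sequence for f. Moreover, if additionally some subsequence ξ_{n_m} ⇀ ξ* ∈ M weakly, then f(ξ*) = ξ*. -/
import Mathlib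


open Filter Topology

/-- if `ξ_n` is a fixed point of `φ_n(x) = (1-ε_n) f(x) + ε_n z`
with `ε_n → 0`, then `‖f(ξ_n) - ξ_n‖ ≤ ε_n d_M → 0`; moreover any weak
subsequential limit `ξ* ∈ M` of `{ξ_n}` is a fixed point of `f`. -/
theorem stmt_19 {X : Type*} [NormedAddCommGroup X] [NormedSpace ℝ X] [CompleteSpace X]
    (opial : ∀ (u : ℕ → X) (p : X),
      (∀ φ : X →L[ℝ] ℝ, Tendsto (fun n => φ (u n)) atTop (𝓝 (φ p))) →
      ∀ z, z ≠ p →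
        Filter.liminf (fun n => ‖u n - p‖) atTop < Filter.liminf (fun n => ‖u n - z‖) atTop)
    (M : Set X) (hMne : M.Nonempty) (hMb : Bornology.IsBounded M)
    (hMc : IsClosed M) (hMconv : Convex ℝ M)
    (dM : ℝ) (hdM : IsLUB {d : ℝ | ∃ v ∈ M, ∃ w ∈ M, d = ‖v - w‖} dM)
    (f : X → X) (hfM : ∀ x ∈ M, f x ∈ M)
    (sharp : ∀ y ∈ M, ∀ yn : ℕ → X, (∀ n, yn n ∈ M) →
      (∀ φ : X →L[ℝ] ℝ, Tendsto (fun n => φ (yn n)) atTop (𝓝 (φ y))) →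
      Filter.liminf (fun n => ‖f (yn n) - f y‖) atTop ≤
        Filter.liminf (fun n => ‖yn n - y‖) atTop)
    (ε : ℕ → ℝ) (hε0 : ∀ n, 0 < ε n) (hε1 : ∀ n, ε n < 1)
    (hεlim : Tendsto ε atTop (𝓝 0))
    (z : X) (hz : z ∈ M)
    (ξ : ℕ → X) (hξM : ∀ n, ξ n ∈ M)
    (hfix : ∀ n, (1 - ε n) • f (ξ n) + ε n • z = ξ n) :
    (∀ n, ‖f (ξ n) - ξ n‖ ≤ ε n * dM) ∧
    Tendsto (fun n => ‖f (ξ n) - ξ n‖) atTop (𝓝 0) ∧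
    (∀ (nm : ℕ → ℕ) (ξs : X), StrictMono nm → ξs ∈ M →
      (∀ φ : X →L[ℝ] ℝ, Tendsto (fun m => φ (ξ (nm m))) atTop (𝓝 (φ ξs))) →
      f ξs = ξs) := by
  -- distance bound inside M
  have hub : ∀ v ∈ M, ∀ w ∈ M, ‖v - w‖ ≤ dM := by
    intro v hv w hw
    exact hdM.1 ⟨v, hv, w, hw, rfl⟩
  have part1 : ∀ n, ‖f (ξ n) - ξ n‖ ≤ ε n * dM := by
    intro n
    have hkey : f (ξ n) - ξ n = ε n • (f (ξ n) - z) := by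
      have h := hfix n
      set y := f (ξ n) with hy
      rw [← h]; module
    rw [hkey, norm_smul, Real.norm_eq_abs, abs_of_pos (hε0 n)]
    exact mul_le_mul_of_nonneg_left (hub _ (hfM _ (hξM n)) _ hz) (hε0 n).le
  refine ⟨part1, ?_, ?_⟩
  · have h1 : Tendsto (fun n => ε n * dM) atTop (𝓝 0) := by
      simpa using hεlim.mul_const dM
    exact squeeze_zero (fun n => norm_nonneg _) part1 h1
  · intro nm ξs hmono hξs hweak
    set u : ℕ → X := fun m => ξ (nm m) with hu
    by_contra hne
    have hfξs : f ξs ∈ M := hfM _ hξs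
    have huM : ∀ m, u m ∈ M := fun m => hξM _
    -- boundedness facts
    have bddA : ∀ (g : ℕ → ℝ), (∀ m, 0 ≤ g m) → (∀ m, g m ≤ dM) →
        (atTop.IsBoundedUnder (· ≥ ·) g ∧ atTop.IsCoboundedUnder (· ≥ ·) g ∧
         atTop.IsBoundedUnder (· ≤ ·) g) := by
      intro g h0 hd
      have hbd : atTop.IsBoundedUnder (· ≤ ·) g := Filter.isBoundedUnder_of ⟨dM, hd⟩
      exact ⟨Filter.isBoundedUnder_of ⟨0, h0⟩, hbd.isCoboundedUnder_ge, hbd⟩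
    obtain ⟨bA, cA, uA⟩ := bddA (fun m => ‖u m - ξs‖) (fun m => norm_nonneg _)
      (fun m => hub _ (huM m) _ hξs)
    obtain ⟨bB, cB, uB⟩ := bddA (fun m => ‖f (u m) - f ξs‖) (fun m => norm_nonneg _)
      (fun m => hub _ (hfM _ (huM m)) _ hfξs)
    obtain ⟨bC, cC, uC⟩ := bddA (fun m => ‖u m - f ξs‖) (fun m => norm_nonneg _)
      (fun m => hub _ (huM m) _ hfξs)
    -- sharp: B ≤ A
    have hBA := sharp ξs hξs u huM hweak
    -- opial: A < C
    have hAC := opial u ξs hweak (f ξs) hne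
    -- ‖f(u m) - u m‖ → 0
    have hafp : Tendsto (fun m => ‖f (u m) - u m‖) atTop (𝓝 0) := by
      have h1 : Tendsto (fun n => ε n * dM) atTop (𝓝 0) := by
        simpa using hεlim.mul_const dM
      have h2 := (squeeze_zero (fun n => norm_nonneg _) part1 h1)
      exact h2.comp hmono.tendsto_atTop
    -- C ≤ B
    have hCB : Filter.liminf (fun m => ‖u m - f ξs‖) atTop ≤
        Filter.liminf (fun m => ‖f (u m) - f ξs‖) atTop := by
      refine le_of_forall_pos_le_add fun δ hδ => ?_
      have hev : ∀ᶠ m in atTop, ‖u m - f ξs‖ ≤ ‖f (u m) - f ξs‖ + δ := by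
        filter_upwards [hafp.eventually (gt_mem_nhds hδ)] with m hm
        calc ‖u m - f ξs‖ ≤ ‖u m - f (u m)‖ + ‖f (u m) - f ξs‖ := norm_sub_le_norm_sub_add_norm_sub _ _ _
          _ ≤ ‖f (u m) - f ξs‖ + δ := by
              rw [norm_sub_rev]
              linarith [abs_nonneg (‖f (u m) - u m‖)]
      calc Filter.liminf (fun m => ‖u m - f ξs‖) atTop
          ≤ Filter.liminf (fun m => ‖f (u m) - f ξs‖ + δ) atTop := by
            refine Filter.liminf_le_liminf hev bC ?_
            exact (Filter.isBoundedUnder_of ⟨dM + δ, fun m =>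
              add_le_add (hub _ (hfM _ (huM m)) _ hfξs) le_rfl⟩).isCoboundedUnder_ge
        _ = Filter.liminf (fun m => ‖f (u m) - f ξs‖) atTop + δ :=
            liminf_add_const atTop _ δ cB bB
    exact absurd (hAC.trans_le (hCB.trans hBA)) (lt_irrefl _)
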